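/- Let G and G' be two graphs on the same vertex set having the same 3-element homogeneous subsets, and let U be their Boolean sum G ∔ G'. If U contains no triangle, then every connected component of U is a cycle of even length, a path, or an isolated vertex; in particular U is bipartite. -/

import Mathlib

open SimpleGraph

/-- The claw `K_{1,3}`: vertex 0 joined to each of the pairwise
    nonadjacent vertices 1, 2, 3. -/
def claw : SimpleGraph (Fin 4) := SimpleGraph.fromRel (fun a _ => a = 0)

/-- A graph is claw-free if it has no induced subgraph isomorphic to `K_{1,3}`. -/
def ClawFree {V : Type*} (G : SimpleGraph V) : Prop := IsEmpty (claw ↪g G)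

/-- The Boolean sum `G ∔ G'` of two graphs on the same vertex set: its edge set
    is the symmetric difference of the edge sets of `G` and `G'`. -/
def boolSum {V : Type*} (G G' : SimpleGraph V) : SimpleGraph V := G \ G' ⊔ G' \ G

/-- `G` and `G'` have the same 3-element homogeneous subsets (a set being
    homogeneous if it is a clique or an independent set). -/
def SameHomog3 {V : Type*} (G G' : SimpleGraph V) : Prop :=
  ∀ s : Finset V, s.card = 3 →
    ((G.IsClique (s : Set V) ∨ Gᶜ.IsClique (s : Set V)) ↔
      (G'.IsClique (s : Set V) ∨ G'ᶜ.IsClique (s : Set V)))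

/-- Every connected component of `G` is a cycle of even length, a path,
    or an isolated vertex. -/
def ComponentsEvenCyclePath {V : Type*} (G : SimpleGraph V) : Prop :=
  ∀ c : G.ConnectedComponent,
    (∃ n, 4 ≤ n ∧ Even n ∧ Nonempty (G.induce c.supp ≃g cycleGraph n)) ∨
    (∃ n, 1 ≤ n ∧ Nonempty (G.induce c.supp ≃g pathGraph n))

set_option linter.unusedSectionVars false

section Aux

variable {V : Type*}

lemma getVert_inj {G : SimpleGraph V} {u v : V} {p : G.Walk u v} (hp : p.IsPath) :
    ∀ i j, i ≤ p.length → j ≤ p.length → p.getVert i = p.getVert j → i = j := by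
  induction p with
  | nil => intro i j hi hj _; simp only [Walk.length_nil, Nat.le_zero] at hi hj; omega
  | @cons a b c hadj q ih =>
    rw [Walk.cons_isPath_iff] at hp
    intro i j hi hj hij
    match i, j with
    | 0, 0 => rfl
    | 0, k + 1 =>
      exfalso
      apply hp.2
      rw [Walk.mem_support_iff_exists_getVert]
      simp only [Walk.getVert_zero, Walk.getVert_cons_succ] at hij
      exact ⟨k, hij.symm, by simpa [Walk.length_cons] using hj⟩
    | k + 1, 0 =>
      exfalso
      apply hp.2
      rw [Walk.mem_support_iff_exists_getVert]
      simp only [Walk.getVert_zero, Walk.getVert_cons_succ] at hij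
      exact ⟨k, hij, by simpa [Walk.length_cons] using hi⟩
    | k + 1, l + 1 =>
      simp only [Walk.getVert_cons_succ] at hij
      have := ih hp.1 k l (by simpa [Walk.length_cons] using hi)
        (by simpa [Walk.length_cons] using hj) hij
      omega

lemma reachable_induce_of_walk {G : SimpleGraph V} (S : Set V) :
    ∀ {u v : V} (p : G.Walk u v) (hS : ∀ w ∈ p.support, w ∈ S),
      (G.induce S).Reachable ⟨u, hS u p.start_mem_support⟩ ⟨v, hS v p.end_mem_support⟩ := by
  intro u v p
  induction p with
  | nil => intro hS; rfl
  | @cons a b c hadj q ih =>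
    intro hS
    have hb : b ∈ S := hS b (by simp)
    have hstep : (G.induce S).Adj ⟨a, hS a (Walk.start_mem_support _)⟩ ⟨b, hb⟩ := by
      simpa [comap_adj] using hadj
    refine hstep.reachable.trans ?_
    have := ih (fun w hw => hS w (by simp [hw]))
    convert this using 2

lemma induce_supp_connected (G : SimpleGraph V) (c : G.ConnectedComponent) :
    (G.induce c.supp).Connected := by
  classical
  obtain ⟨v, rfl⟩ := c.exists_rep
  rw [connected_iff]
  refine ⟨?_, ⟨⟨v, rfl⟩⟩⟩
  rintro ⟨a, ha⟩ ⟨b, hb⟩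
  have ha' := (ConnectedComponent.mem_supp_iff _ _).mp ha
  have hb' := (ConnectedComponent.mem_supp_iff _ _).mp hb
  have hr : G.Reachable a b := ConnectedComponent.exact (ha'.trans hb'.symm)
  obtain ⟨p⟩ := hr
  have hS : ∀ w ∈ p.support, w ∈ (G.connectedComponentMk v).supp := by
    intro w hw
    rw [ConnectedComponent.mem_supp_iff]
    exact ConnectedComponent.sound
      ((Walk.takeUntil p w hw).reachable.symm.trans (ConnectedComponent.exact ha'))
  exact reachable_induce_of_walk _ p hS

lemma bool_aux1 : ∀ {x y z : Bool}, x ≠ y → x ≠ z → y = z := by decide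
lemma bool_aux2 : ∀ {x y z : Bool}, x ≠ z → z ≠ y → x = y := by decide
lemma bool_no3 : ∀ {x y z : Bool}, x ≠ y → x ≠ z → z ≠ y → False := by decide
lemma bool_iff : ∀ {x y z : Bool}, x ≠ y → ((y = z) ↔ ¬(x = z)) := by decide

lemma fin_sub_val_one_iff {n : ℕ} (hn : 1 ≤ n) (a b : Fin (n+1)) :
    (a - b).val = 1 ↔ (a.val = b.val + 1 ∨ (b.val = n ∧ a.val = 0)) := by
  rw [Fin.sub_def]
  simp only
  have ha := a.isLt; have hb := b.isLt
  constructor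
  · intro hmod
    rcases Nat.lt_or_ge a.val b.val with hlt | hge
    · right
      have hlt' : (n+1) - b.val + a.val < n+1 := by omega
      rw [Nat.mod_eq_of_lt hlt'] at hmod
      omega
    · left
      have he : (n+1) - b.val + a.val = (a.val - b.val) + (n+1) := by omega
      rw [he, Nat.add_mod_right, Nat.mod_eq_of_lt (by omega)] at hmod
      omega
  · intro h
    rcases h with h | h
    · have he : (n+1) - b.val + a.val = 1 + (n+1) := by omega
      rw [he, Nat.add_mod_right]; exact Nat.mod_eq_of_lt (by omega)
    · have he : (n+1) - b.val + a.val = 1 := by omega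
      rw [he]; exact Nat.mod_eq_of_lt (by omega)

lemma classify [Fintype V] (H : SimpleGraph V) (t : V → V → Bool)
    (tsymm : ∀ u v, t u v = t v u)
    (huniq : ∀ v a b : V, H.Adj v a → H.Adj v b → t v a = t v b → a = b) :
    ComponentsEvenCyclePath H := by
  classical
  intro c
  have Kconn := induce_supp_connected H c
  have Kuniq : ∀ (v a b : c.supp), (H.induce c.supp).Adj v a → (H.induce c.supp).Adj v b →
      t v.val a.val = t v.val b.val → a = b := by
    intro v a b hva hvb ht
    exact Subtype.ext (huniq v.val a.val b.val hva hvb ht)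
  have Kalt : ∀ (v a b : c.supp), (H.induce c.supp).Adj v a → (H.induce c.supp).Adj v b →
      a ≠ b → t v.val a.val ≠ t v.val b.val :=
    fun v a b h1 h2 hne hEq => hne (Kuniq v a b h1 h2 hEq)
  have Kno3 : ∀ (v a b d : c.supp), (H.induce c.supp).Adj v a → (H.induce c.supp).Adj v b →
      (H.induce c.supp).Adj v d → a ≠ b → a ≠ d → b ≠ d → False := by
    intro v a b d h1 h2 h3 hab had hbd
    by_cases e1 : t v.val a.val = t v.val b.val
    · exact hab (Kuniq v a b h1 h2 e1)
    by_cases e2 : t v.val a.val = t v.val d.val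
    · exact had (Kuniq v a d h1 h3 e2)
    exact hbd (Kuniq v b d h2 h3 (bool_aux1 e1 e2))
  obtain ⟨v0, hv0⟩ := c.exists_rep
  have hv0' : v0 ∈ c.supp := by rw [ConnectedComponent.mem_supp_iff]; exact hv0
  -- longest path
  let P : Set ℕ := {n | ∃ (x y : c.supp) (q : (H.induce c.supp).Walk x y), q.IsPath ∧ q.length = n}
  have hPne : P.Nonempty := ⟨0, ⟨v0, hv0'⟩, ⟨v0, hv0'⟩, Walk.nil, by simp, rfl⟩
  have hPbdd : BddAbove P := by
    refine ⟨Fintype.card c.supp, ?_⟩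
    rintro m ⟨a, b, q, hq, rfl⟩
    exact hq.length_lt.le
  obtain ⟨x, y, p, hp, hlen⟩ := Nat.sSup_mem hPne hPbdd
  have hmax : ∀ (a b : c.supp) (q : (H.induce c.supp).Walk a b), q.IsPath →
      q.length ≤ p.length := by
    intro a b q hq
    rw [hlen]
    exact le_csSup hPbdd ⟨a, b, q, hq, rfl⟩
  set n := p.length with hn
  let f : ℕ → c.supp := p.getVert
  have hinj : ∀ i j, i ≤ n → j ≤ n → f i = f j → i = j := getVert_inj hp
  have fne : ∀ i j, i ≤ n → j ≤ n → i ≠ j → f i ≠ f j :=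
    fun i j hi hj hne hEq => hne (hinj i j hi hj hEq)
  have hadjsucc : ∀ i, i < n → (H.induce c.supp).Adj (f i) (f (i+1)) :=
    fun i hi => p.adj_getVert_succ hi
  have hmem : ∀ i, i ≤ n → f i ∈ p.support :=
    fun i hi => Walk.mem_support_iff_exists_getVert.mpr ⟨i, rfl, hi⟩
  -- every vertex of the component is on p
  have hall : ∀ w : c.supp, w ∈ p.support := by
    by_contra hcon
    push_neg at hcon
    obtain ⟨w, hw⟩ := hcon
    have hbd : ∀ {a b : c.supp} (q : (H.induce c.supp).Walk a b), a ∈ p.support →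
        b ∉ p.support →
        ∃ u z, (H.induce c.supp).Adj u z ∧ u ∈ p.support ∧ z ∉ p.support := by
      intro a b q
      induction q with
      | nil => intro h1 h2; exact absurd h1 h2
      | @cons a m b hadj q ih =>
        intro h1 h2
        by_cases hm : m ∈ p.support
        · exact ih hm h2
        · exact ⟨a, m, hadj, h1, hm⟩
    obtain ⟨q⟩ := Kconn.preconnected x w
    obtain ⟨u, z, huz, hu, hz⟩ := hbd q p.start_mem_support hw
    rw [Walk.mem_support_iff_exists_getVert] at hu
    obtain ⟨i, hiu, hile⟩ := hu
    by_cases hi0 : i = 0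
    · subst hi0
      have hux : u = x := by rw [← hiu]; exact p.getVert_zero
      have hadj' : (H.induce c.supp).Adj z x := by rw [← hux]; exact huz.symm
      have hp' : (Walk.cons hadj' p).IsPath := (Walk.cons_isPath_iff _ _).mpr ⟨hp, hz⟩
      have := hmax _ _ _ hp'
      simp only [Walk.length_cons] at this
      omega
    by_cases hin : i = n
    · subst hin
      have huy : u = y := by rw [← hiu]; exact p.getVert_length
      have hadj' : (H.induce c.supp).Adj z y := by rw [← huy]; exact huz.symm
      have hp' : (Walk.cons hadj' p.reverse).IsPath :=
        (Walk.cons_isPath_iff _ _).mpr ⟨hp.reverse, by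
          rw [Walk.support_reverse, List.mem_reverse]; exact hz⟩
      have := hmax _ _ _ hp'
      simp only [Walk.length_cons, Walk.length_reverse] at this
      omega
    · obtain ⟨i', rfl⟩ : ∃ i', i = i' + 1 := ⟨i - 1, by omega⟩
      have hlt : i' + 1 < n := by omega
      refine Kno3 u (f i') (f (i' + 2)) z ?_ ?_ ?_ ?_ ?_ ?_
      · rw [← hiu]; exact (hadjsucc i' (by omega)).symm
      · rw [← hiu]; exact hadjsucc (i' + 1) hlt
      · exact huz
      · exact fne i' (i' + 2) (by omega) (by omega) (by omega)
      · exact fun hEq => hz (hEq ▸ hmem i' (by omega))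
      · exact fun hEq => hz (hEq ▸ hmem (i' + 2) (by omega))
  -- chords
  have chord_aux : ∀ i j, i < j → j ≤ n → (H.induce c.supp).Adj (f i) (f j) →
      j = i + 1 ∨ (i = 0 ∧ j = n ∧ 2 ≤ n) := by
    intro i j hij hj hadj
    by_cases hji : j = i + 1
    · exact Or.inl hji
    have hj2 : i + 2 ≤ j := by omega
    have hi0 : i = 0 := by
      by_contra hi0
      obtain ⟨i', rfl⟩ : ∃ i', i = i' + 1 := ⟨i - 1, by omega⟩
      exact Kno3 (f (i' + 1)) (f i') (f (i' + 2)) (f j)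
        (hadjsucc i' (by omega)).symm (hadjsucc (i' + 1) (by omega)) hadj
        (fne i' (i' + 2) (by omega) (by omega) (by omega))
        (fne i' j (by omega) (by omega) (by omega))
        (fne (i' + 2) j (by omega) (by omega) (by omega))
    subst hi0
    have hjn : j = n := by
      by_contra hjn
      obtain ⟨j', rfl⟩ : ∃ j', j = j' + 1 := ⟨j - 1, by omega⟩
      exact Kno3 (f (j' + 1)) (f j') (f (j' + 2)) (f 0)
        (hadjsucc j' (by omega)).symm (hadjsucc (j' + 1) (by omega)) hadj.symm
        (fne j' (j' + 2) (by omega) (by omega) (by omega))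
        (fne j' 0 (by omega) (by omega) (by omega))
        (fne (j' + 2) 0 (by omega) (by omega) (by omega))
    exact Or.inr ⟨rfl, hjn, by omega⟩
  -- the bijection
  let g : Fin (n + 1) → c.supp := fun a => f a.val
  have hbij : Function.Bijective g := by
    constructor
    · intro a b hEq
      exact Fin.ext (hinj a.val b.val (by omega) (by omega) hEq)
    · intro w
      obtain ⟨i, hfi, hile⟩ := Walk.mem_support_iff_exists_getVert.mp (hall w)
      exact ⟨⟨i, by omega⟩, hfi⟩
  let e : Fin (n + 1) ≃ c.supp := Equiv.ofBijective g hbij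
  by_cases hcyc : (H.induce c.supp).Adj (f 0) (f n) ∧ 2 ≤ n
  · -- cycle case
    left
    obtain ⟨hcadj, hn2⟩ := hcyc
    -- n ≥ 3 : no triangle
    have hn3 : 3 ≤ n := by
      by_contra hn3
      have hn2' : n = 2 := by omega
      have e1 := Kalt (f 1) (f 0) (f 2) (hadjsucc 0 (by omega)).symm (hadjsucc 1 (by omega))
        (fne 0 2 (by omega) (by omega) (by omega))
      have hc2 : (H.induce c.supp).Adj (f 0) (f 2) := by rw [hn2'] at hcadj; exact hcadj
      have e2 := Kalt (f 0) (f 1) (f 2) (hadjsucc 0 (by omega)) hc2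
        (fne 1 2 (by omega) (by omega) (by omega))
      have e3 := Kalt (f 2) (f 0) (f 1) hc2.symm (hadjsucc 1 (by omega)).symm
        (fne 0 1 (by omega) (by omega) (by omega))
      rw [tsymm (f 1).val (f 0).val] at e1
      rw [tsymm (f 2).val (f 0).val, tsymm (f 2).val (f 1).val] at e3
      exact bool_no3 e1 e2 e3
    -- evenness
    have halt : ∀ i, i + 1 < n → t (f i).val (f (i+1)).val ≠ t (f (i+1)).val (f (i+2)).val := by
      intro i hi
      have := Kalt (f (i+1)) (f i) (f (i+2)) (hadjsucc i (by omega)).symm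
        (hadjsucc (i+1) hi) (fne i (i+2) (by omega) (by omega) (by omega))
      rw [tsymm (f (i+1)).val (f i).val] at this
      exact this
    have hpar : ∀ i, i < n → (t (f i).val (f (i+1)).val = t (f 0).val (f 1).val ↔ Even i) := by
      intro i
      induction i with
      | zero => intro _; simp
      | succ i ih =>
        intro hi
        have h1 := halt i hi
        have h2 := ih (by omega)
        rw [Nat.even_add_one, ← h2]
        exact bool_iff h1
    have hEvenn1 : Even (n + 1) := by
      obtain ⟨m, hm⟩ : ∃ m, n = m + 1 := ⟨n - 1, by omega⟩
      have hcadj' : (H.induce c.supp).Adj (f (m+1)) (f 0) := by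
        rw [← hm]; exact hcadj.symm
      have h1 : t (f (m+1)).val (f m).val ≠ t (f (m+1)).val (f 0).val :=
        Kalt (f (m+1)) (f m) (f 0) (hadjsucc m (by omega)).symm hcadj'
          (fne m 0 (by omega) (by omega) (by omega))
      have h2 : t (f 0).val (f (m+1)).val ≠ t (f 0).val (f 1).val :=
        Kalt (f 0) (f (m+1)) (f 1) hcadj'.symm (hadjsucc 0 (by omega))
          (fne (m+1) 1 (by omega) (by omega) (by omega))
      rw [tsymm (f (m+1)).val (f m).val] at h1
      rw [tsymm (f 0).val (f (m+1)).val] at h2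
      have h3 : t (f m).val (f (m+1)).val = t (f 0).val (f 1).val := bool_aux2 h1 h2
      have h4 := (hpar m (by omega)).mp h3
      obtain ⟨k, hk⟩ := h4
      exact ⟨k + 1, by omega⟩
    -- adjacency characterization
    have hchar : ∀ a b : Fin (n + 1), (H.induce c.supp).Adj (e a) (e b) ↔
        (cycleGraph (n + 1)).Adj a b := by
      intro a b
      have hea : e a = f a.val := rfl
      have heb : e b = f b.val := rfl
      rw [hea, heb, cycleGraph_adj', fin_sub_val_one_iff (by omega),
        fin_sub_val_one_iff (by omega)]
      constructor
      · intro hadj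
        rcases Nat.lt_trichotomy a.val b.val with hlt | hEq | hgt
        · rcases chord_aux a.val b.val hlt (by omega) hadj with h | ⟨h1, h2, _⟩
          · exact Or.inr (Or.inl h)
          · exact Or.inl (Or.inr ⟨by omega, h1⟩)
        · exact absurd (Fin.ext hEq : a = b) (fun hEq' => (hEq' ▸ hadj).ne rfl)
        · rcases chord_aux b.val a.val hgt (by omega) hadj.symm with h | ⟨h1, h2, _⟩
          · exact Or.inl (Or.inl h)
          · exact Or.inr (Or.inr ⟨by omega, h1⟩)
      · intro hadj
        rcases hadj with (h | ⟨h1, h2⟩) | (h | ⟨h1, h2⟩)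
        · have : b.val < n := by omega
          have := hadjsucc b.val this
          rw [← h] at this
          exact this.symm
        · rw [h1, h2]; exact hcadj
        · have : a.val < n := by omega
          have := hadjsucc a.val this
          rw [← h] at this
          exact this
        · rw [h1, h2]; exact hcadj.symm
    refine ⟨n + 1, by omega, hEvenn1, ⟨?_⟩⟩
    exact (RelIso.mk e (by intro a b; exact hchar a b)).symm
  · -- path case
    right
    have hchar : ∀ a b : Fin (n + 1), (H.induce c.supp).Adj (e a) (e b) ↔
        (pathGraph (n + 1)).Adj a b := by
      intro a b
      have hea : e a = f a.val := rfl
      have heb : e b = f b.val := rfl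
      rw [hea, heb, pathGraph_adj]
      constructor
      · intro hadj
        rcases Nat.lt_trichotomy a.val b.val with hlt | hEq | hgt
        · rcases chord_aux a.val b.val hlt (by omega) hadj with h | ⟨h1, h2, h3⟩
          · exact Or.inl (by omega)
          · exfalso; apply hcyc; refine ⟨?_, h3⟩
            have e1 : f 0 = f ↑a := by rw [h1]
            have e2 : f n = f ↑b := by rw [h2]
            rw [e1, e2]; exact hadj
        · exact absurd (Fin.ext hEq : a = b) (fun hEq' => (hEq' ▸ hadj).ne rfl)
        · rcases chord_aux b.val a.val hgt (by omega) hadj.symm with h | ⟨h1, h2, h3⟩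
          · exact Or.inr (by omega)
          · exfalso; apply hcyc; refine ⟨?_, h3⟩
            have e1 : f 0 = f ↑b := by rw [h1]
            have e2 : f n = f ↑a := by rw [h2]
            rw [e1, e2]; exact hadj.symm
      · intro hadj
        rcases hadj with h | h
        · have hlt : a.val < n := by omega
          have := hadjsucc a.val hlt
          rw [h] at this
          exact this
        · have hlt : b.val < n := by omega
          have := hadjsucc b.val hlt
          rw [h] at this
          exact this.symm
    refine ⟨n + 1, by omega, ⟨?_⟩⟩
    exact (RelIso.mk e (by intro a b; exact hchar a b)).symm

lemma even_cycle_coloring {m : ℕ} (hm2 : 2 ≤ m) (hm : Even m) :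
    Nonempty ((cycleGraph m).Coloring Bool) := by
  obtain ⟨k, hk⟩ : ∃ k, m = k + 1 := ⟨m - 1, by omega⟩
  subst hk
  refine ⟨Coloring.mk (fun i => decide (i.val % 2 = 0)) ?_⟩
  intro a b hadj
  rw [cycleGraph_adj'] at hadj
  obtain ⟨j, hj⟩ := hm
  rw [ne_eq, decide_eq_decide]
  rcases hadj with h | h <;> rw [fin_sub_val_one_iff (by omega)] at h <;> omega

lemma colorable_of_components (H : SimpleGraph V) (h : ComponentsEvenCyclePath H) :
    H.Colorable 2 := by
  classical
  have key : ∀ c : H.ConnectedComponent, Nonempty ((H.induce c.supp).Coloring Bool) := by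
    intro c
    rcases h c with ⟨m, hm4, hmE, ⟨φ⟩⟩ | ⟨m, hm1, ⟨φ⟩⟩
    · obtain ⟨C⟩ := even_cycle_coloring (by omega : 2 ≤ m) hmE
      exact ⟨Coloring.mk (fun v => C (φ v)) (fun {a b} hadj => C.valid (φ.map_adj_iff.mpr hadj))⟩
    · have C := pathGraph.bicoloring m
      exact ⟨Coloring.mk (fun v => C (φ v)) (fun {a b} hadj => C.valid (φ.map_adj_iff.mpr hadj))⟩
  have col := fun c => (key c).some
  let C : V → Bool := fun v => col (H.connectedComponentMk v) ⟨v, rfl⟩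
  have hcol : ∀ (c : H.ConnectedComponent) (w : V) (hw : w ∈ c.supp),
      C w = col c ⟨w, hw⟩ := by
    intro c w hw
    have hw' : H.connectedComponentMk w = c := (ConnectedComponent.mem_supp_iff _ _).mp hw
    subst hw'
    rfl
  have : Nonempty (H.Coloring Bool) := by
    refine ⟨Coloring.mk C ?_⟩
    intro u v hadj
    have hc : H.connectedComponentMk v = H.connectedComponentMk u :=
      (ConnectedComponent.connectedComponentMk_eq_of_adj hadj).symm
    have hu : u ∈ (H.connectedComponentMk u).supp := rfl
    have hv : v ∈ (H.connectedComponentMk u).supp := hc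
    have hadj' : (H.induce (H.connectedComponentMk u).supp).Adj ⟨u, hu⟩ ⟨v, hv⟩ := by
      simpa using hadj
    have := (col (H.connectedComponentMk u)).valid hadj'
    rw [hcol _ u hu, hcol _ v hv]
    exact this
  obtain ⟨C'⟩ := this
  simpa using C'.colorable

section DecEq
variable [DecidableEq V]

lemma boolSum_adj {G G' : SimpleGraph V} {u v : V} :
    (boolSum G G').Adj u v ↔ (G.Adj u v ∧ ¬ G'.Adj u v) ∨ (G'.Adj u v ∧ ¬ G.Adj u v) := by
  simp [boolSum, sup_adj, sdiff_adj]

lemma homog_iff {G : SimpleGraph V} {u v w : V} (h1 : u ≠ v) (h2 : v ≠ w) (h3 : u ≠ w) :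
    (G.IsClique (({u,v,w} : Finset V) : Set V) ∨ Gᶜ.IsClique (({u,v,w} : Finset V) : Set V)) ↔
    ((G.Adj u v ∧ G.Adj u w ∧ G.Adj v w) ∨ (¬G.Adj u v ∧ ¬G.Adj u w ∧ ¬G.Adj v w)) := by
  have c1 : G.IsClique (({u,v,w} : Finset V) : Set V) ↔ G.IsNClique 3 {u,v,w} := by
    rw [isNClique_iff]
    constructor
    · intro hc
      exact ⟨hc, by rw [Finset.card_insert_of_notMem (by simp [h1, h3]),
        Finset.card_insert_of_notMem (by simp [h2]), Finset.card_singleton]⟩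
    · exact fun hc => hc.1
  have c2 : Gᶜ.IsClique (({u,v,w} : Finset V) : Set V) ↔ Gᶜ.IsNClique 3 {u,v,w} := by
    rw [isNClique_iff]
    constructor
    · intro hc
      exact ⟨hc, by rw [Finset.card_insert_of_notMem (by simp [h1, h3]),
        Finset.card_insert_of_notMem (by simp [h2]), Finset.card_singleton]⟩
    · exact fun hc => hc.1
  rw [c1, c2, is3Clique_triple_iff, is3Clique_triple_iff]
  simp only [compl_adj]
  constructor
  · rintro (⟨a,b,c⟩ | ⟨⟨_,a⟩,⟨_,b⟩,⟨_,c⟩⟩)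
    · exact Or.inl ⟨a,b,c⟩
    · exact Or.inr ⟨a,b,c⟩
  · rintro (⟨a,b,c⟩ | ⟨a,b,c⟩)
    · exact Or.inl ⟨a,b,c⟩
    · exact Or.inr ⟨⟨h1,a⟩,⟨h3,b⟩,⟨h2,c⟩⟩

lemma card3 {u v w : V} (h1 : u ≠ v) (h2 : v ≠ w) (h3 : u ≠ w) :
    ({u,v,w} : Finset V).card = 3 := by
  rw [Finset.card_insert_of_notMem (by simp [h1, h3]),
    Finset.card_insert_of_notMem (by simp [h2]), Finset.card_singleton]

lemma alt {G G' : SimpleGraph V} (h : SameHomog3 G G')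
    (htf : (boolSum G G').CliqueFree 3) {u v w : V}
    (huv : (boolSum G G').Adj u v) (hvw : (boolSum G G').Adj v w) (huw : u ≠ w) :
    ¬ (G.Adj u v ↔ G.Adj v w) := by
  intro hiff
  have h1 : u ≠ v := huv.ne
  have h2 : v ≠ w := hvw.ne
  have hU : ¬ (boolSum G G').Adj u w := by
    intro hadj
    exact htf {u,v,w} (is3Clique_triple_iff.mpr ⟨huv, hadj, hvw⟩)
  have hh := h {u,v,w} (card3 h1 h2 huw)
  rw [homog_iff h1 h2 huw, homog_iff h1 h2 huw] at hh
  rw [boolSum_adj] at huv hvw hU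
  tauto

lemma unique_nbr {G G' : SimpleGraph V} (h : SameHomog3 G G')
    (htf : (boolSum G G').CliqueFree 3) {v a b : V}
    (hva : (boolSum G G').Adj v a) (hvb : (boolSum G G').Adj v b)
    (hiff : G.Adj v a ↔ G.Adj v b) : a = b := by
  by_contra hne
  apply alt h htf hva.symm hvb hne
  rw [G.adj_comm a v]
  exact hiff

end DecEq

end Aux

/-- If `G` and `G'` have the same 3-element homogeneous subsets and their
    Boolean sum `U` contains no triangle, then every connected component of `U`
    is a cycle of even length, a path, or an isolated vertex; in particular `U`
    is bipartite. -/
theorem boolSum_triangleFree_components {V : Type*} [Fintype V]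
    (G G' : SimpleGraph V) (h : SameHomog3 G G')
    (htf : (boolSum G G').CliqueFree 3) :
    ComponentsEvenCyclePath (boolSum G G') ∧ (boolSum G G').Colorable 2 := by
  classical
  have hcomp : ComponentsEvenCyclePath (boolSum G G') := by
    apply classify _ (fun u v => decide (G.Adj u v))
    · intro u v
      rw [decide_eq_decide]
      exact ⟨fun hh => hh.symm, fun hh => hh.symm⟩
    · intro v a b hva hvb ht
      rw [decide_eq_decide] at ht
      exact unique_nbr h htf hva hvb ht
  exact ⟨hcomp, colorable_of_components _ hcomp⟩
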